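/- The map sending (s,x,y,b,r) to the 4×4 matrix [[1, -yr, (x+by)/r, 2s-yx],[0, r, -b/r, x],[0, 0, 1/r, y],[0, 0, 0, 1]] is an injective group homomorphism from the SSR group G into GL(4,R). -/

import Mathlib

/-- The underlying set of the SSR group: (s,x,y,b,r) with r > 0. -/
def SSR : Type := ℝ × ℝ × ℝ × ℝ × {r : ℝ // 0 < r}

/-- The SSR group multiplication. -/
noncomputable def ssrMul (g g' : SSR) : SSR :=
  ⟨g.1 + g'.1 + g.2.1 * ((g.2.2.2.2 : ℝ)⁻¹ * g'.2.2.1)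
      - g.2.2.2.1 * ((g.2.2.2.2 : ℝ)⁻¹ * g'.2.2.1) ^ 2 / 2,
   g.2.1 + (g.2.2.2.2 : ℝ) * g'.2.1 - g.2.2.2.1 * ((g.2.2.2.2 : ℝ)⁻¹ * g'.2.2.1),
   g.2.2.1 + (g.2.2.2.2 : ℝ)⁻¹ * g'.2.2.1,
   g.2.2.2.1 + g'.2.2.2.1 * (g.2.2.2.2 : ℝ) ^ 2,
   ⟨(g.2.2.2.2 : ℝ) * (g'.2.2.2.2 : ℝ), mul_pos g.2.2.2.2.2 g'.2.2.2.2.2⟩⟩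

/-- The identity element of the SSR group. -/
noncomputable def ssrOne : SSR := ⟨0, 0, 0, 0, ⟨1, one_pos⟩⟩

/-- The 4×4 matrix realisation of an SSR group element. -/
noncomputable def ssrMat (g : SSR) : Matrix (Fin 4) (Fin 4) ℝ :=
  !![1, -g.2.2.1 * (g.2.2.2.2 : ℝ), (g.2.1 + g.2.2.2.1 * g.2.2.1) / (g.2.2.2.2 : ℝ),
        2 * g.1 - g.2.2.1 * g.2.1;
     0, (g.2.2.2.2 : ℝ), -g.2.2.2.1 / (g.2.2.2.2 : ℝ), g.2.1;
     0, 0, (g.2.2.2.2 : ℝ)⁻¹, g.2.2.1;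
     0, 0, 0, 1]


theorem mul_fin_four' (a11 a12 a13 a14 a21 a22 a23 a24 a31 a32 a33 a34 a41 a42 a43 a44
    b11 b12 b13 b14 b21 b22 b23 b24 b31 b32 b33 b34 b41 b42 b43 b44 : ℝ) :
    !![a11,a12,a13,a14; a21,a22,a23,a24; a31,a32,a33,a34; a41,a42,a43,a44] *
    !![b11,b12,b13,b14; b21,b22,b23,b24; b31,b32,b33,b34; b41,b42,b43,b44] =
    !![a11*b11+a12*b21+a13*b31+a14*b41, a11*b12+a12*b22+a13*b32+a14*b42,
       a11*b13+a12*b23+a13*b33+a14*b43, a11*b14+a12*b24+a13*b34+a14*b44;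
       a21*b11+a22*b21+a23*b31+a24*b41, a21*b12+a22*b22+a23*b32+a24*b42,
       a21*b13+a22*b23+a23*b33+a24*b43, a21*b14+a22*b24+a23*b34+a24*b44;
       a31*b11+a32*b21+a33*b31+a34*b41, a31*b12+a32*b22+a33*b32+a34*b42,
       a31*b13+a32*b23+a33*b33+a34*b43, a31*b14+a32*b24+a33*b34+a34*b44;
       a41*b11+a42*b21+a43*b31+a44*b41, a41*b12+a42*b22+a43*b32+a44*b42,
       a41*b13+a42*b23+a43*b33+a44*b43, a41*b14+a42*b24+a43*b34+a44*b44] := by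
  ext i j
  fin_cases i <;> fin_cases j <;> simp [Matrix.mul_apply, Fin.sum_univ_four]

theorem fin_four_ext {a b c d e f g h i j k l m n o p a' b' c' d' e' f' g' h' i' j' k' l' m' n' o' p' : ℝ}
    (h1 : a = a') (h2 : b = b') (h3 : c = c') (h4 : d = d') (h5 : e = e') (h6 : f = f')
    (h7 : g = g') (h8 : h = h') (h9 : i = i') (h10 : j = j') (h11 : k = k') (h12 : l = l')
    (h13 : m = m') (h14 : n = n') (h15 : o = o') (h16 : p = p') :
    !![a,b,c,d; e,f,g,h; i,j,k,l; m,n,o,p] = !![a',b',c',d'; e',f',g',h'; i',j',k',l'; m',n',o',p'] := by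
  subst h1 h2 h3 h4 h5 h6 h7 h8 h9 h10 h11 h12 h13 h14 h15 h16; rfl

/-- The matrix realisation is an injective homomorphism from the SSR group into GL(4,ℝ). -/
theorem ssr_matrix_realisation :
    Function.Injective ssrMat ∧
    (∀ g : SSR, IsUnit (ssrMat g)) ∧
    (∀ g h : SSR, ssrMat (ssrMul g h) = ssrMat g * ssrMat h) := by
  refine ⟨?_, ?_, ?_⟩
  · rintro ⟨s, x, y, b, r, hr⟩ ⟨s', x', y', b', r', hr'⟩ h
    have h11 : r = r' := congrFun (congrFun h 1) 1
    have h13 : x = x' := congrFun (congrFun h 1) 3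
    have h23 : y = y' := congrFun (congrFun h 2) 3
    have h12 : -b / r = -b' / r' := congrFun (congrFun h 1) 2
    have h03 : 2 * s - y * x = 2 * s' - y' * x' := congrFun (congrFun h 0) 3
    subst h11; subst h13; subst h23
    have hb : b = b' := by
      field_simp at h12
      linarith
    have hs : s = s' := by linarith
    subst hb; subst hs; rfl
  · rintro ⟨s, x, y, b, r, hr⟩
    rw [Matrix.isUnit_iff_isUnit_det]
    have : (ssrMat ⟨s, x, y, b, r, hr⟩).det = 1 := by
      simp [ssrMat, Matrix.det_succ_row_zero, Fin.sum_univ_succ]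
      field_simp
    rw [this]; exact isUnit_one
  · rintro ⟨s, x, y, b, r, hr⟩ ⟨s', x', y', b', r', hr'⟩
    have hr0 : r ≠ 0 := hr.ne'
    have hr0' : r' ≠ 0 := hr'.ne'
    show ssrMat _ = _
    simp only [ssrMat, ssrMul, mul_fin_four']
    apply fin_four_ext <;> field_simp <;> ring
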